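/- The Cartan map carries spinors of isotropic subspaces to decomposable tensors: for a maximal isotropic subspace H ⊆ V meeting F in a k-dimensional space, with adapted hyperbolic basis so that H = ⟨e_{k+1},…,e_n,f₁,…,f_k⟩ and ω_H = e_{k+1}⋯e_n f, setting a = e_{k+1}⋯e_n one has, in the Clifford algebra, a f a* = 2^{n−k} e_{k+1}⋯e_n f₁⋯f_k, and hence (a f a*) • 1 = 2^{n−k} e_{k+1}∧⋯∧e_n∧f₁∧⋯∧f_k ∈ ⋀ⁿV. In particular the Cartan map ν̂₂(af) = [component in ⋀ⁿV of (afa*) • 1] sends the spinor line of H to the Plücker line of H, so ν̂₂ maps the isotropic Grassmann cone in its spinor embedding onto the isotropic Grassmann cone in its Plücker embedding. -/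

import Mathlib

open CliffordAlgebra

/-- The bilinear form `(v|w) = ½(q(v+w) − q(v) − q(w))` associated to `q`. -/
noncomputable def halfPolar {K V : Type*} [Field K] [CharZero K] [AddCommGroup V] [Module K V]
    (q : QuadraticForm K V) : V →ₗ[K] Module.Dual K V :=
  (2⁻¹ : K) • (QuadraticMap.polarBilin q)

/-- The ordered Clifford product of the vectors `g i`, `i ∈ s` (in increasing order). -/
noncomputable def cliffProdOn {K V : Type*} [Field K] [AddCommGroup V] [Module K V]
    (q : QuadraticForm K V) {m : ℕ} (g : Fin m → V) (s : Finset (Fin m)) :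
    CliffordAlgebra q :=
  ((s.sort (· ≤ ·)).map (fun i => ι q (g i))).prod

/-- The ordered wedge product of the vectors `g i`, `i ∈ s` (in increasing order). -/
noncomputable def extProdOn (K : Type*) {V : Type*} [Field K] [AddCommGroup V] [Module K V]
    {m : ℕ} (g : Fin m → V) (s : Finset (Fin m)) : ExteriorAlgebra K V :=
  ((s.sort (· ≤ ·)).map (fun i => ExteriorAlgebra.ι K (g i))).prod

section Aux

variable {K V : Type*} [Field K] [AddCommGroup V] [Module K V] (q : QuadraticForm K V)

theorem aux_eq_of_perm_of_sorted {l₁ l₂ : List ℕ} (hp : l₁.Perm l₂)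
    (h₁ : l₁.Pairwise (· ≤ ·)) (h₂ : l₂.Pairwise (· ≤ ·)) : l₁ = l₂ :=
  List.Perm.eq_of_pairwise' h₁ h₂ hp

theorem aux_sort (n : ℕ) (p : ℕ → Prop) [DecidablePred p] :
    (Finset.sort (Finset.univ.filter (fun i : Fin n => p i.val)) (· ≤ ·)).map Fin.val
      = (List.range n).filter (fun j => p j) := by
  apply aux_eq_of_perm_of_sorted
  · rw [List.perm_ext_iff_of_nodup]
    · intro a
      simp only [List.mem_map, Finset.mem_sort, Finset.mem_filter, Finset.mem_univ, true_and,
        List.mem_filter, List.mem_range]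
      constructor
      · rintro ⟨i, hi, rfl⟩; exact ⟨i.isLt, by simpa using hi⟩
      · rintro ⟨ha, hp⟩; exact ⟨⟨a, ha⟩, by simpa using hp, rfl⟩
    · exact (Finset.sort_nodup _ _).map (fun a b h => Fin.val_injective h)
    · exact (List.nodup_range (n := n)).filter _
  · exact List.Pairwise.map _ (fun a b (h : a ≤ b) => (Fin.le_def.mp h : a.val ≤ b.val))
      (Finset.pairwise_sort _ _)
  · exact List.Pairwise.sublist List.filter_sublist (List.pairwise_le_range (n := n))

theorem aux_sort_univ (n : ℕ) :
    (Finset.sort (Finset.univ : Finset (Fin n)) (· ≤ ·)).map Fin.val = List.range n := by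
  apply aux_eq_of_perm_of_sorted
  · rw [List.perm_ext_iff_of_nodup]
    · intro a
      simp only [List.mem_map, Finset.mem_sort, Finset.mem_univ, true_and, List.mem_range]
      constructor
      · rintro ⟨i, rfl⟩; exact i.isLt
      · rintro ha; exact ⟨⟨a, ha⟩, rfl⟩
    · exact (Finset.sort_nodup _ _).map (fun a b h => Fin.val_injective h)
    · exact List.nodup_range (n := n)
  · exact List.Pairwise.map _ (fun a b (h : a ≤ b) => (Fin.le_def.mp h : a.val ≤ b.val))
      (Finset.pairwise_sort _ _)
  · exact List.pairwise_le_range (n := n)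

theorem aux_filter_ge (n k : ℕ) (hk : k ≤ n) :
    (List.range n).filter (fun j => decide (k ≤ j)) = List.range' k (n - k) := by
  induction n, hk using Nat.le_induction with
  | base =>
    simp only [Nat.sub_self, List.range'_zero]
    exact List.filter_eq_nil_iff.mpr (by intro a ha; simpa using List.mem_range.mp ha)
  | succ n hn ih =>
    rw [List.range_succ, List.filter_append, ih, Nat.succ_sub hn, List.range'_concat]
    simp [Nat.le_of_lt, hn, Nat.add_sub_cancel' hn]

theorem aux_filter_lt (n k : ℕ) (hk : k ≤ n) :
    (List.range n).filter (fun j => decide (j < k)) = List.range k := by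
  induction n, hk using Nat.le_induction with
  | base => exact List.filter_eq_self.mpr (by intro a ha; simpa using List.mem_range.mp ha)
  | succ n hn ih =>
    rw [List.range_succ, List.filter_append, ih]
    simp [Nat.not_lt.mpr hn]

theorem aux_swap (v w : V) :
    ι q v * ι q w = algebraMap K _ (QuadraticMap.polar q v w) - ι q w * ι q v := by
  rw [eq_sub_iff_add_eq]; exact ι_mul_ι_add_swap v w

theorem aux_anticomm (w : V) (l : List V) (h : ∀ x ∈ l, QuadraticMap.polar q w x = 0) :
    ι q w * (l.map (ι q)).prod = ((-1 : K) ^ l.length) • ((l.map (ι q)).prod * ι q w) := by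
  induction l with
  | nil => simp
  | cons x t ih =>
    have hx : QuadraticMap.polar (⇑q) w x = 0 := h x (List.mem_cons_self)
    have ht : ∀ y ∈ t, QuadraticMap.polar (⇑q) w y = 0 := fun y hy => h y (List.mem_cons_of_mem _ hy)
    simp only [List.map_cons, List.prod_cons, List.length_cons]
    rw [← mul_assoc, aux_swap q w x, hx, map_zero, zero_sub, neg_mul, mul_assoc,
      ih ht, pow_succ, mul_comm ((-1:K)^t.length) (-1), mul_smul]
    simp [mul_assoc]

theorem aux_anticomm' (w : V) (l : List V) (h : ∀ x ∈ l, QuadraticMap.polar q w x = 0) :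
    (l.map (ι q)).prod * ι q w = ((-1 : K) ^ l.length) • (ι q w * (l.map (ι q)).prod) := by
  rw [aux_anticomm q w l h, smul_smul, ← pow_add, ← two_mul, pow_mul]
  simp

theorem aux_prod_mul_eq_zero (w : V) (l : List V) (hw : w ∈ l) (hq : q w = 0)
    (h : ∀ x ∈ l, QuadraticMap.polar q w x = 0) :
    (l.map (ι q)).prod * ι q w = 0 := by
  induction l with
  | nil => simp at hw
  | cons x t ih =>
    have ht : ∀ y ∈ t, QuadraticMap.polar (⇑q) w y = 0 := fun y hy => h y (List.mem_cons_of_mem _ hy)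
    simp only [List.map_cons, List.prod_cons]
    rw [mul_assoc]
    by_cases hwt : w ∈ t
    · rw [ih hwt ht, mul_zero]
    · have hwx : w = x := by rcases List.mem_cons.mp hw with h1 | h1; exact h1; exact absurd h1 hwt
      have hqx : q x = 0 := by rw [← hwx]; exact hq
      rw [aux_anticomm' q w t ht, mul_smul_comm, hwx, ← mul_assoc, ι_sq_scalar, hqx, map_zero,
        zero_mul, smul_zero]

theorem aux_reverse_prod (l : List V) :
    reverse (Q := q) (l.map (ι q)).prod = (l.reverse.map (ι q)).prod := by
  induction l with
  | nil => simp
  | cons x t ih => simp [List.prod_cons, reverse.map_mul, ih]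

/-- The main inductive computation in the Clifford algebra. -/
theorem aux_main (e' f' : ℕ → V) (n k : ℕ) (hk : k ≤ n)
    (hpe : ∀ i j, QuadraticMap.polar q (e' i) (e' j) = 0)
    (hqe : ∀ i, q (e' i) = 0)
    (hpef : ∀ i j, j < i → QuadraticMap.polar q (e' i) (f' j) = 0)
    (hp2 : ∀ m, m < n → QuadraticMap.polar q (f' m) (e' m) = 2) :
    ∀ d m, k ≤ m → m + d = n →
      (((List.range' k (n - k)).map (fun j => ι q (e' j))).prod
        * ((List.range n).map (fun j => ι q (f' j))).prod)
        * (((List.range' m d).map (fun j => ι q (e' j))).reverse).prod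
      = ((2 : K) ^ d) • ((((List.range' k (n - k)).map (fun j => ι q (e' j))).prod
          * ((List.range m).map (fun j => ι q (f' j))).prod)) := by
  set A := ((List.range' k (n - k)).map (fun j => ι q (e' j))).prod with hA
  have hZ : ∀ m, k ≤ m → m < n → A * ι q (e' m) = 0 := by
    intro m hkm hmn
    have : ((List.range' k (n-k)).map (fun j => ι q (e' j))).prod
        = (((List.range' k (n-k)).map e').map (ι q)).prod := by
      rw [List.map_map]; rfl
    rw [hA, this]
    apply aux_prod_mul_eq_zero
    · exact List.mem_map.mpr ⟨m, List.mem_range'_1.mpr ⟨hkm, by omega⟩, rfl⟩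
    · exact hqe m
    · rintro x hx
      obtain ⟨j, _, rfl⟩ := List.mem_map.mp hx
      exact hpe m j
  intro d
  induction d with
  | zero =>
    intro m hkm hmn
    simp only [List.range'_zero, List.map_nil, List.reverse_nil, List.prod_nil, mul_one,
      pow_zero, one_smul]
    obtain rfl : m = n := by omega
    rfl
  | succ d ih =>
    intro m hkm hmn
    have hmn' : m < n := by omega
    have hsplit : (((List.range' m (d+1)).map (fun j => ι q (e' j))).reverse).prod
        = (((List.range' (m+1) d).map (fun j => ι q (e' j))).reverse).prod * ι q (e' m) := by
      rw [List.range'_succ, List.map_cons, List.reverse_cons, List.prod_append, List.prod_cons,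
        List.prod_nil, mul_one]
    rw [hsplit, ← mul_assoc, ih (m+1) (by omega) (by omega), smul_mul_assoc]
    have hF : ((List.range (m+1)).map (fun j => ι q (f' j))).prod
        = ((List.range m).map (fun j => ι q (f' j))).prod * ι q (f' m) := by
      rw [List.range_succ]; simp
    set Fm := ((List.range m).map (fun j => ι q (f' j))).prod with hFm
    have hanns : A * Fm * ι q (e' m) = 0 := by
      have hcomm : Fm * ι q (e' m)
          = ((-1 : K) ^ ((List.range m).map f').length) • (ι q (e' m) * Fm) := by
        have hrw : Fm = (((List.range m).map f').map (ι q)).prod := by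
          rw [hFm, List.map_map]; rfl
        rw [hrw]
        · apply aux_anticomm'
          rintro x hx
          obtain ⟨j, hj, rfl⟩ := List.mem_map.mp hx
          exact hpef m j (List.mem_range.mp hj)
      rw [mul_assoc, hcomm, mul_smul_comm, ← mul_assoc, hZ m hkm hmn', zero_mul, smul_zero]
    have key : A * ((List.range (m+1)).map (fun j => ι q (f' j))).prod * ι q (e' m)
        = (2 : K) • (A * Fm) := by
      rw [hF, ← mul_assoc, mul_assoc (A * Fm), aux_swap q (f' m) (e' m), hp2 m hmn',
        mul_sub, ← mul_assoc, hanns, zero_mul, sub_zero]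
      rw [mul_assoc, ← Algebra.commutes, ← Algebra.smul_def, mul_smul_comm]
    rw [key, smul_smul, pow_succ]

theorem aux_contract (d : Module.Dual K V) (l : List V) (h : ∀ x ∈ l, d x = 0) :
    contractLeft (Q := (0 : QuadraticForm K V)) d ((l.map (ExteriorAlgebra.ι K)).prod) = 0 := by
  induction l with
  | nil =>
    show contractLeft (Q := (0 : QuadraticForm K V)) d 1 = 0
    have : (1 : ExteriorAlgebra K V) = algebraMap K _ 1 := by simp
    rw [this, contractLeft_algebraMap]
  | cons x t ih =>
    simp only [List.map_cons, List.prod_cons]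
    rw [show ExteriorAlgebra.ι K x = CliffordAlgebra.ι (0 : QuadraticForm K V) x from rfl,
      contractLeft_ι_mul, h x (List.mem_cons_self),
      ih (fun y hy => h y (List.mem_cons_of_mem _ hy)), zero_smul, mul_zero, sub_zero]

theorem aux_phi (D : V → Module.Dual K V)
    (φ : CliffordAlgebra q →ₐ[K] Module.End K (ExteriorAlgebra K V))
    (hφ : ∀ v : V, φ (ι q v) =
      LinearMap.mulLeft K (ExteriorAlgebra.ι K v)
        + contractLeft (Q := (0 : QuadraticForm K V)) (D v))
    (l : List V) (hl : l.Pairwise (fun x y => D x y = 0)) :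
    φ ((l.map (ι q)).prod) 1 = (l.map (ExteriorAlgebra.ι K)).prod := by
  induction l with
  | nil => simp
  | cons x t ih =>
    obtain ⟨hx, ht⟩ := List.pairwise_cons.mp hl
    simp only [List.map_cons, List.prod_cons, map_mul]
    rw [Module.End.mul_apply, ih ht, hφ x, LinearMap.add_apply, LinearMap.mulLeft_apply,
      aux_contract (d := D x) _ hx, add_zero]

end Aux

/-- the Cartan map carries spinors of isotropic subspaces to decomposable
tensors.  For a maximal isotropic `H ⊆ V` meeting `F` in a `k`-dimensional space, with
adapted hyperbolic basis so that `H = ⟨e_{k+1},…,e_n,f₁,…,f_k⟩`, `ω_H = e_{k+1}⋯e_n f`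
and `a = e_{k+1}⋯e_n`, one has `a f a* = 2^{n−k} e_{k+1}⋯e_n f₁⋯f_k` in the Clifford
algebra, and hence `(a f a*) • 1 = 2^{n−k} e_{k+1}∧⋯∧e_n∧f₁∧⋯∧f_k ∈ ⋀ⁿV`, where `•`
is the Clifford module action of `Cl(V)` on `⋀V` via `ι + o`.  In particular the
Cartan map `ν̂₂(af)` = degree-`n` component of `(afa*)•1` sends the spinor line of `H`
to the Plücker line of `H`, so `ν̂₂` maps the isotropic Grassmann cone in its spinor
embedding onto the isotropic Grassmann cone in its Plücker embedding. -/
theorem stmt17 {K V : Type*} [Field K] [IsAlgClosed K] [CharZero K]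
    [AddCommGroup V] [Module K V] [FiniteDimensional K V]
    (q : QuadraticForm K V) (n : ℕ)
    (hdim : Module.finrank K V = 2 * n)
    (e f : Fin n → V)
    (hbasis : LinearIndependent K (Sum.elim e f))
    (hee : ∀ i j, halfPolar q (e i) (e j) = 0)
    (hff : ∀ i j, halfPolar q (f i) (f j) = 0)
    (hef : ∀ i j, halfPolar q (e i) (f j) = if i = j then 1 else 0)
    (k : ℕ) (hk : k ≤ n) :
    -- a f a* = 2^{n−k} e_{k+1}⋯e_n f₁⋯f_k in Cl(V) …
    (cliffProdOn q e (Finset.univ.filter (fun i : Fin n => k ≤ (i : ℕ)))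
        * cliffProdOn q f Finset.univ
        * reverse (cliffProdOn q e (Finset.univ.filter (fun i : Fin n => k ≤ (i : ℕ))))
      = ((2 : K) ^ (n - k)) •
          (cliffProdOn q e (Finset.univ.filter (fun i : Fin n => k ≤ (i : ℕ)))
            * cliffProdOn q f (Finset.univ.filter (fun i : Fin n => (i : ℕ) < k)))) ∧
    -- … and hence (a f a*) • 1 = 2^{n−k} e_{k+1}∧⋯∧e_n∧f₁∧⋯∧f_k in ⋀V
    (∀ φ : CliffordAlgebra q →ₐ[K] Module.End K (ExteriorAlgebra K V),
      (∀ v : V, φ (ι q v) =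
        LinearMap.mulLeft K (ExteriorAlgebra.ι K v)
          + contractLeft (Q := (0 : QuadraticForm K V)) (halfPolar q v)) →
      φ (cliffProdOn q e (Finset.univ.filter (fun i : Fin n => k ≤ (i : ℕ)))
          * cliffProdOn q f Finset.univ
          * reverse (cliffProdOn q e
              (Finset.univ.filter (fun i : Fin n => k ≤ (i : ℕ))))) 1
        = ((2 : K) ^ (n - k)) •
            (extProdOn K e (Finset.univ.filter (fun i : Fin n => k ≤ (i : ℕ)))
              * extProdOn K f (Finset.univ.filter (fun i : Fin n => (i : ℕ) < k)))) := by
  -- extend e, f to ℕ-indexed families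
  set e' : ℕ → V := fun j => if h : j < n then e ⟨j, h⟩ else 0 with he'
  set f' : ℕ → V := fun j => if h : j < n then f ⟨j, h⟩ else 0 with hf'
  have he'v : ∀ i : Fin n, e' i.val = e i := fun i => by simp [he', i.isLt]
  have hf'v : ∀ i : Fin n, f' i.val = f i := fun i => by simp [hf', i.isLt]
  -- basic facts about halfPolar and polar
  have hhp : ∀ v w : V, halfPolar q v w = 2⁻¹ * QuadraticMap.polar q v w := by
    intro v w
    simp [halfPolar, QuadraticMap.polarBilin_apply_apply]
  have hpolar : ∀ v w : V, QuadraticMap.polar q v w = 2 * halfPolar q v w := by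
    intro v w
    rw [hhp, ← mul_assoc, mul_inv_cancel₀ (two_ne_zero (α := K)), one_mul]
  -- halfPolar facts for e', f'
  have hhee' : ∀ i j, halfPolar q (e' i) (e' j) = 0 := by
    intro i j
    by_cases hi : i < n
    · by_cases hj : j < n
      · rw [show e' i = e ⟨i, hi⟩ from by simp [he', hi],
          show e' j = e ⟨j, hj⟩ from by simp [he', hj]]
        exact hee _ _
      · rw [show e' j = 0 from by simp [he', hj]]; simp
    · rw [show e' i = 0 from by simp [he', hi]]; simp
  have hhff' : ∀ i j, halfPolar q (f' i) (f' j) = 0 := by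
    intro i j
    by_cases hi : i < n
    · by_cases hj : j < n
      · rw [show f' i = f ⟨i, hi⟩ from by simp [hf', hi],
          show f' j = f ⟨j, hj⟩ from by simp [hf', hj]]
        exact hff _ _
      · rw [show f' j = 0 from by simp [hf', hj]]; simp
    · rw [show f' i = 0 from by simp [hf', hi]]; simp
  have hhef' : ∀ i j, i ≠ j → halfPolar q (e' i) (f' j) = 0 := by
    intro i j hij
    by_cases hi : i < n
    · by_cases hj : j < n
      · rw [show e' i = e ⟨i, hi⟩ from by simp [he', hi],
          show f' j = f ⟨j, hj⟩ from by simp [hf', hj], hef]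
        simp only [Fin.mk.injEq]
        exact if_neg hij
      · rw [show f' j = 0 from by simp [hf', hj]]; simp
    · rw [show e' i = 0 from by simp [he', hi]]; simp
  have hhef1' : ∀ i, i < n → halfPolar q (e' i) (f' i) = 1 := by
    intro i hi
    rw [show e' i = e ⟨i, hi⟩ from by simp [he', hi],
      show f' i = f ⟨i, hi⟩ from by simp [hf', hi], hef]
    simp
  -- polar facts
  have hpe : ∀ i j, QuadraticMap.polar q (e' i) (e' j) = 0 := by
    intro i j; rw [hpolar, hhee', mul_zero]
  have hqe : ∀ i, q (e' i) = 0 := by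
    intro i
    have h1 : QuadraticMap.polar q (e' i) (e' i) = 2 • q (e' i) := QuadraticMap.polar_self q _
    have h2 : QuadraticMap.polar q (e' i) (e' i) = 0 := hpe i i
    have h3 : (2 : K) * q (e' i) = 0 := by
      rw [← h2, h1]; push_cast [nsmul_eq_mul]; ring
    rcases mul_eq_zero.mp h3 with h | h
    · exact absurd h (two_ne_zero (α := K))
    · exact h
  have hpef : ∀ i j, j < i → QuadraticMap.polar q (e' i) (f' j) = 0 := by
    intro i j hij; rw [hpolar, hhef' i j (by omega), mul_zero]
  have hp2 : ∀ m, m < n → QuadraticMap.polar q (f' m) (e' m) = 2 := by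
    intro m hm
    rw [QuadraticMap.polar_comm, hpolar, hhef1' m hm, mul_one]
  -- list translations
  have hmapE : ∀ (l : List (Fin n)),
      l.map (fun i => ι q (e i)) = (l.map Fin.val).map (fun j => ι q (e' j)) := by
    intro l
    rw [List.map_map]
    exact List.map_congr_left (fun i _ => by rw [Function.comp_apply, he'v])
  have hmapF : ∀ (l : List (Fin n)),
      l.map (fun i => ι q (f i)) = (l.map Fin.val).map (fun j => ι q (f' j)) := by
    intro l
    rw [List.map_map]
    exact List.map_congr_left (fun i _ => by rw [Function.comp_apply, hf'v])
  have hmapEext : ∀ (l : List (Fin n)),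
      l.map (fun i => ExteriorAlgebra.ι K (e i))
        = (l.map Fin.val).map (fun j => ExteriorAlgebra.ι K (e' j)) := by
    intro l
    rw [List.map_map]
    exact List.map_congr_left (fun i _ => by rw [Function.comp_apply, he'v])
  have hmapFext : ∀ (l : List (Fin n)),
      l.map (fun i => ExteriorAlgebra.ι K (f i))
        = (l.map Fin.val).map (fun j => ExteriorAlgebra.ι K (f' j)) := by
    intro l
    rw [List.map_map]
    exact List.map_congr_left (fun i _ => by rw [Function.comp_apply, hf'v])
  have hsort_ge : (Finset.sort
      (Finset.univ.filter (fun i : Fin n => k ≤ (i : ℕ))) (· ≤ ·)).map Fin.val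
        = List.range' k (n - k) := by
    rw [aux_sort n (fun j => k ≤ j), aux_filter_ge n k hk]
  have hsort_lt : (Finset.sort
      (Finset.univ.filter (fun i : Fin n => (i : ℕ) < k)) (· ≤ ·)).map Fin.val
        = List.range k := by
    rw [aux_sort n (fun j => j < k), aux_filter_lt n k hk]
  have hA : cliffProdOn q e (Finset.univ.filter (fun i : Fin n => k ≤ (i : ℕ)))
      = ((List.range' k (n - k)).map (fun j => ι q (e' j))).prod := by
    rw [cliffProdOn, hmapE, hsort_ge]
  have hFn : cliffProdOn q f Finset.univ
      = ((List.range n).map (fun j => ι q (f' j))).prod := by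
    rw [cliffProdOn, hmapF, aux_sort_univ]
  have hFk : cliffProdOn q f (Finset.univ.filter (fun i : Fin n => (i : ℕ) < k))
      = ((List.range k).map (fun j => ι q (f' j))).prod := by
    rw [cliffProdOn, hmapF, hsort_lt]
  have hRev : reverse (cliffProdOn q e (Finset.univ.filter (fun i : Fin n => k ≤ (i : ℕ))))
      = (((List.range' k (n - k)).map (fun j => ι q (e' j))).reverse).prod := by
    rw [hA]
    have h1 : ((List.range' k (n - k)).map (fun j => ι q (e' j))).prod
        = (((List.range' k (n - k)).map e').map (ι q)).prod := by rw [List.map_map]; rfl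
    rw [h1, aux_reverse_prod, ← List.map_reverse, ← List.map_reverse, List.map_map]
    rfl
  have main := aux_main q e' f' n k hk hpe hqe hpef hp2 (n - k) k le_rfl
    (Nat.add_sub_cancel' hk)
  have part1 : cliffProdOn q e (Finset.univ.filter (fun i : Fin n => k ≤ (i : ℕ)))
        * cliffProdOn q f Finset.univ
        * reverse (cliffProdOn q e (Finset.univ.filter (fun i : Fin n => k ≤ (i : ℕ))))
      = ((2 : K) ^ (n - k)) •
          (cliffProdOn q e (Finset.univ.filter (fun i : Fin n => k ≤ (i : ℕ)))
            * cliffProdOn q f (Finset.univ.filter (fun i : Fin n => (i : ℕ) < k))) := by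
    rw [hRev, hA, hFn, hFk]
    exact main
  refine ⟨part1, ?_⟩
  intro φ hφ
  rw [part1, Algebra.smul_def, map_mul, AlgHom.commutes, Module.End.mul_apply,
    Module.algebraMap_end_apply]
  congr 1
  -- φ (A * Fk) 1 = ext products
  have hAFk : cliffProdOn q e (Finset.univ.filter (fun i : Fin n => k ≤ (i : ℕ)))
      * cliffProdOn q f (Finset.univ.filter (fun i : Fin n => (i : ℕ) < k))
      = ((((List.range' k (n - k)).map e') ++ ((List.range k).map f')).map (ι q)).prod := by
    rw [hA, hFk, List.map_append, List.prod_append, List.map_map, List.map_map]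
    rfl
  have hExt : extProdOn K e (Finset.univ.filter (fun i : Fin n => k ≤ (i : ℕ)))
      * extProdOn K f (Finset.univ.filter (fun i : Fin n => (i : ℕ) < k))
      = ((((List.range' k (n - k)).map e') ++ ((List.range k).map f')).map
          (ExteriorAlgebra.ι K)).prod := by
    rw [extProdOn, extProdOn, hmapEext, hmapFext, hsort_ge, hsort_lt, List.map_append,
      List.prod_append, List.map_map, List.map_map]
    rfl
  rw [hAFk, hExt]
  apply aux_phi q (fun v => halfPolar q v) φ hφ
  -- pairwise orthogonality of the combined list
  rw [List.pairwise_append]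
  refine ⟨?_, ?_, ?_⟩
  · apply List.Pairwise.map
    · intro a b hab
      exact hhee' a b
    · exact List.Pairwise.imp (fun h => Nat.le_of_lt h) (List.pairwise_lt_range' (s := k) (n := n - k))
  · apply List.Pairwise.map
    · intro a b hab
      exact hhff' a b
    · exact List.Pairwise.imp (fun h => Nat.le_of_lt h) (List.pairwise_lt_range (n := k))
  · rintro x hx y hy
    obtain ⟨i, hi, rfl⟩ := List.mem_map.mp hx
    obtain ⟨j, hj, rfl⟩ := List.mem_map.mp hy
    have hi' := List.mem_range'_1.mp hi
    have hj' := List.mem_range.mp hj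
    exact hhef' i j (by omega)
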